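/- arXiv:2009.13800 — 2 statements merged into one kernel-verified Lean document; each statement's English description precedes it below -/
import Mathlib

section
/- Let Ψ : ℝ²_{≥0} → ℝ be concave and positively homogeneous of degree 1 with δ_θ := Ψ(cos θ, sin θ), δ_θ ≥ 0 for all θ ∈ [0, π/2], δ_θ > 0 for all θ ∈ (0, π/2), and δ_0 = max_{θ ∈ [0, π/2]} δ_θ. If additionally δ_{π/2} ≥ δ_θ·sin θ fails for all small θ ∈ (0, π/2) only when δ_0 ≥ δ_{π/2−β}/sin β for all β ∈ (0,π/2), then δ_{π/2} = 0. -/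
open Real Set

/-- The closed first quadrant in ℝ². -/
def firstQuadrant : Set (ℝ × ℝ) := {v | 0 ≤ v.1 ∧ 0 ≤ v.2}

/-- If the growth rate of slope θ, arising from a concave positively homogeneous function,
is nonnegative on `[0, π/2]`, positive on `(0, π/2)`, and attains its maximum at the
endpoint `θ = 0`, then the growth rate at the other endpoint `π/2` vanishes. -/
theorem growthRate_pi_div_two_eq_zero_of_max_at_zero (Ψ : ℝ × ℝ → ℝ)
    (hconc : ConcaveOn ℝ firstQuadrant Ψ)
    (hhom : ∀ c : ℝ, 0 ≤ c → ∀ v ∈ firstQuadrant, Ψ (c • v) = c * Ψ v)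
    (hnonneg : ∀ θ ∈ Set.Icc 0 (π / 2), 0 ≤ Ψ (Real.cos θ, Real.sin θ))
    (hpos : ∀ θ ∈ Set.Ioo 0 (π / 2), 0 < Ψ (Real.cos θ, Real.sin θ))
    (hmax : ∀ θ ∈ Set.Icc 0 (π / 2),
      Ψ (Real.cos θ, Real.sin θ) ≤ Ψ (Real.cos 0, Real.sin 0)) :
    Ψ (Real.cos (π / 2), Real.sin (π / 2)) = 0 := by
  have hpi : (0:ℝ) < π / 2 := by positivity
  set A := Ψ (1, 0) with hA
  set B := Ψ (0, 1) with hB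
  have h10 : ((1:ℝ), (0:ℝ)) ∈ firstQuadrant := by constructor <;> norm_num
  have h01 : ((0:ℝ), (1:ℝ)) ∈ firstQuadrant := by constructor <;> norm_num
  have hgoal : Ψ (Real.cos (π / 2), Real.sin (π / 2)) = B := by
    rw [Real.cos_pi_div_two, Real.sin_pi_div_two]
  have hA0 : 0 ≤ A := by
    have := hnonneg 0 ⟨le_refl 0, le_of_lt hpi⟩
    simpa [Real.cos_zero, Real.sin_zero] using this
  have hBnonneg : 0 ≤ B := by
    have := hnonneg (π/2) ⟨le_of_lt hpi, le_refl _⟩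
    simpa [Real.cos_pi_div_two, Real.sin_pi_div_two] using this
  -- Key inequality from concavity + homogeneity + max at 0
  have key : ∀ θ ∈ Set.Ioo 0 (π/2), Real.sin θ * B ≤ (1 - Real.cos θ) * A := by
    intro θ hθ
    have hc : 0 < Real.cos θ := Real.cos_pos_of_mem_Ioo ⟨by linarith [hθ.1], hθ.2⟩
    have hs : 0 < Real.sin θ := Real.sin_pos_of_pos_of_lt_pi hθ.1 (by linarith [hθ.2, Real.pi_pos])
    set s := Real.cos θ + Real.sin θ with hsdef
    have hs0 : 0 < s := by positivity
    have hsum : Real.cos θ / s + Real.sin θ / s = 1 := by field_simp; exact hsdef.symm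
    have hcv := hconc.2 h10 h01 (by positivity : (0:ℝ) ≤ Real.cos θ / s)
      (by positivity : (0:ℝ) ≤ Real.sin θ / s) hsum
    have hvmem : ((Real.cos θ, Real.sin θ) : ℝ × ℝ) ∈ firstQuadrant :=
      ⟨le_of_lt hc, le_of_lt hs⟩
    have hpt : (Real.cos θ / s) • ((1:ℝ), (0:ℝ)) + (Real.sin θ / s) • ((0:ℝ), (1:ℝ))
        = (1/s) • ((Real.cos θ, Real.sin θ) : ℝ × ℝ) := by
      simp [Prod.ext_iff]
      constructor <;> ring
    rw [hpt, hhom (1/s) (by positivity) _ hvmem] at hcv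
    have hmaxθ : Ψ (Real.cos θ, Real.sin θ) ≤ A := by
      have := hmax θ ⟨le_of_lt hθ.1, le_of_lt hθ.2⟩
      simpa [Real.cos_zero, Real.sin_zero, hA] using this
    have h1 : (Real.cos θ / s) * A + (Real.sin θ / s) * B ≤ (1/s) * A := by
      calc (Real.cos θ / s) * A + (Real.sin θ / s) * B ≤ (1/s) * Ψ (Real.cos θ, Real.sin θ) := by
            simpa [smul_eq_mul, hA, hB] using hcv
        _ ≤ (1/s) * A := by
            apply mul_le_mul_of_nonneg_left hmaxθ (by positivity)
    have h2 : Real.cos θ * A + Real.sin θ * B ≤ A := by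
      have := mul_le_mul_of_nonneg_left h1 (le_of_lt hs0)
      have hsne : s ≠ 0 := ne_of_gt hs0
      field_simp at this
      linarith [this]
    linarith
  -- From the key inequality deduce B ≤ θ * A for all small θ
  have key2 : ∀ θ ∈ Set.Ioo 0 (π/2), B ≤ θ * A := by
    intro θ hθ
    have h := key θ hθ
    have hhalf : θ/2 ∈ Set.Ioo 0 (π/2) := ⟨by linarith [hθ.1], by linarith [hθ.2]⟩
    have hsh : 0 < Real.sin (θ/2) := Real.sin_pos_of_pos_of_lt_pi hhalf.1
      (by linarith [hhalf.2, Real.pi_pos])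
    have hch : Real.cos (π/4) ≤ Real.cos (θ/2) := by
      apply Real.cos_le_cos_of_nonneg_of_le_pi (by linarith [hhalf.1]) (by linarith [Real.pi_pos])
      linarith [hθ.2]
    have hch2 : (1:ℝ)/2 ≤ Real.cos (θ/2) := by
      have : Real.cos (π/4) = Real.sqrt 2 / 2 := Real.cos_pi_div_four
      nlinarith [Real.sq_sqrt (by norm_num : (2:ℝ) ≥ 0), Real.sqrt_nonneg 2, hch]
    -- sin θ = 2 sin(θ/2) cos(θ/2), 1 - cos θ = 2 sin(θ/2)^2
    have hsin : Real.sin θ = 2 * Real.sin (θ/2) * Real.cos (θ/2) := by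
      rw [← Real.sin_two_mul]; ring_nf
    have hcos : 1 - Real.cos θ = 2 * Real.sin (θ/2)^2 := by
      have h1 := Real.cos_two_mul (θ/2)
      have h2 := Real.sin_sq_add_cos_sq (θ/2)
      have h3 : 2 * (θ/2) = θ := by ring
      rw [h3] at h1
      nlinarith [h1, h2]
    rw [hsin, hcos] at h
    -- divide by 2 sin(θ/2): cos(θ/2) * B ≤ sin(θ/2) * A
    have h3 : Real.cos (θ/2) * B ≤ Real.sin (θ/2) * A := by
      nlinarith [hsh]
    have h4 : Real.sin (θ/2) ≤ θ/2 := by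
      have := Real.sin_le (by linarith [hhalf.1] : 0 ≤ θ/2)
      linarith
    have h5 : Real.sin (θ/2) * A ≤ (θ/2) * A := mul_le_mul_of_nonneg_right h4 hA0
    have h6 : (1/2) * B ≤ Real.cos (θ/2) * B := mul_le_mul_of_nonneg_right hch2 hBnonneg
    nlinarith [hθ.1, hA0, hBnonneg]
  -- Conclude B ≤ 0
  rw [hgoal]
  by_contra hBne
  have hBpos : 0 < B := lt_of_le_of_ne hBnonneg (Ne.symm hBne)
  have hApos : 0 < A := by
    by_contra hA'
    push_neg at hA'
    have := key2 (π/4) ⟨by positivity, by linarith [Real.pi_pos]⟩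
    nlinarith [Real.pi_pos]
  set θ0 := min (B / (2*A)) (π/4) with hθ0
  have hθ0pos : 0 < θ0 := lt_min (by positivity) (by positivity)
  have hθ0lt : θ0 < π/2 := lt_of_le_of_lt (min_le_right _ _) (by linarith [Real.pi_pos])
  have := key2 θ0 ⟨hθ0pos, hθ0lt⟩
  have hθ0le : θ0 ≤ B / (2*A) := min_le_left _ _
  have : B ≤ (B / (2*A)) * A := le_trans this (mul_le_mul_of_nonneg_right hθ0le (le_of_lt hApos))
  have hAne : A ≠ 0 := ne_of_gt hApos
  have heq : A * (B / (2*A)) = B / 2 := by field_simp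
  rw [div_mul_eq_mul_div, mul_comm, mul_div_assoc] at this
  rw [heq] at this
  linarith
end

section
/- Let H₁ = ⟨a₁, a₂⟩ and H₂ = ⟨b₁, b₂⟩ be free groups of rank 2, and let G ≤ H₁ × H₂ be generated by x = (a₁, b₁) and y = (a₂, b₂²). For any nontrivial g ∈ G, writing g as a reduced word in x, y with n total letters from {x, x⁻¹} and m total letters from {y, y⁻¹} (counted with exponents), the word lengths satisfy |g₁| = n + m and |g₂| = n + 2m; hence the ratio |g₂|/|g₁| = (n + 2m)/(n + m) lies in the interval [1, 2]. -/
open Real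

/-- The homomorphism from the free group on two letters sending the first letter to
`x = (a₁, b₁)` and the second to `y = (a₂, b₂²)` in `F₂ × F₂`. -/
noncomputable def phi : FreeGroup (Fin 2) →* FreeGroup (Fin 2) × FreeGroup (Fin 2) :=
  FreeGroup.lift (fun i =>
    if i = 0 then (FreeGroup.of 0, FreeGroup.of 0)
    else (FreeGroup.of 1, FreeGroup.of 1 ^ 2))

namespace TwistAux

variable {α : Type*} [DecidableEq α]

/-- The no-cancellation relation between adjacent letters. -/
def R (a b : α × Bool) : Prop := ¬(a.1 = b.1 ∧ a.2 = !b.2)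

theorem chain'_of_reduce_eq : ∀ (L : List (α × Bool)), FreeGroup.reduce L = L →
    List.Chain' R L := by
  intro L
  induction L with
  | nil => intro _; exact List.isChain_nil
  | cons x L ih =>
    intro h
    rw [FreeGroup.reduce.cons] at h
    rcases hL : FreeGroup.reduce L with _ | ⟨y, tl⟩
    · rw [hL] at h
      simp only at h
      have : L = [] := by
        have := congrArg List.tail h
        simpa using this.symm
      subst this
      simp [List.Chain', List.isChain_singleton]
    · rw [hL] at h
      have h' : (if x.1 = y.1 ∧ x.2 = !y.2 then tl else x :: y :: tl) = x :: L := h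
      by_cases hc : x.1 = y.1 ∧ x.2 = !y.2
      · rw [if_pos hc] at h'
        exfalso
        have h1 : (FreeGroup.reduce L).length ≤ L.length :=
          (FreeGroup.reduce.red (L := L)).length_le
        rw [hL] at h1
        have : tl = x :: L := h'
        rw [this] at h1
        simp at h1
      · rw [if_neg hc] at h'
        have hxL : x :: y :: tl = x :: L := h'
        have hL2 : L = y :: tl := by
          have := congrArg List.tail hxL
          simpa using this.symm
        have hred : FreeGroup.reduce L = L := by rw [hL, hL2]
        have := ih hred
        rw [hL2]
        exact List.IsChain.cons_cons hc (hL2 ▸ this)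

theorem reduce_eq_of_chain' : ∀ (L : List (α × Bool)), List.Chain' R L →
    FreeGroup.reduce L = L := by
  intro L
  induction L with
  | nil => intro _; rfl
  | cons x L ih =>
    intro h
    have hL : FreeGroup.reduce L = L := ih h.tail
    rw [FreeGroup.reduce.cons, hL]
    cases L with
    | nil => rfl
    | cons y tl =>
      have hxy : R x y := List.isChain_cons_cons.mp h |>.1
      simp only [R] at hxy
      simp [if_neg hxy]

end TwistAux

namespace TwistExp

/-- Expansion of a single letter. -/
def ex (p : Fin 2 × Bool) : List (Fin 2 × Bool) := if p.1 = 0 then [p] else [p, p]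

/-- Expansion of a word: letter `1` is doubled. -/
def expand (L : List (Fin 2 × Bool)) : List (Fin 2 × Bool) := L.flatMap ex

@[simp] theorem expand_nil : expand [] = [] := rfl

theorem expand_cons (p : Fin 2 × Bool) (L : List (Fin 2 × Bool)) :
    expand (p :: L) = ex p ++ expand L := rfl

theorem head?_expand (p : Fin 2 × Bool) (L : List (Fin 2 × Bool)) :
    (expand (p :: L)).head? = some p := by
  rw [expand_cons, ex]
  by_cases h : p.1 = 0 <;> simp [h]

theorem chain'_expand : ∀ (L : List (Fin 2 × Bool)), List.Chain' TwistAux.R L →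
    List.Chain' TwistAux.R (expand L) := by
  intro L
  induction L with
  | nil => intro _; exact List.isChain_nil
  | cons p L ih =>
    intro h
    rw [expand_cons]
    have hRpp : TwistAux.R p p := by simp [TwistAux.R]
    have h1 : List.Chain' TwistAux.R (ex p) := by
      rw [ex]; by_cases hp : p.1 = 0 <;> simp [hp, hRpp, List.Chain', List.isChain_singleton, List.isChain_pair]
    refine List.IsChain.append h1 (ih h.tail) ?_
    intro a ha b hb
    have hla : a = p := by
      rw [ex] at ha
      by_cases hp : p.1 = 0 <;> simp [hp] at ha <;> simp [ha]
    cases L with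
    | nil => simp [expand] at hb
    | cons q L' =>
      have hb' : b = q := by
        rw [head?_expand] at hb
        exact (show q = b by simpa using hb).symm
      subst hla; subst hb'
      exact (List.isChain_cons_cons.mp h).1

theorem length_expand : ∀ (L : List (Fin 2 × Bool)),
    (expand L).length = (L.filter (fun p => decide (p.1 = 0))).length
      + 2 * (L.filter (fun p => decide (p.1 = 1))).length := by
  intro L
  induction L with
  | nil => rfl
  | cons p L ih =>
    rw [expand_cons, List.length_append, ih, ex]
    have : p.1 = 0 ∨ p.1 = 1 := by omega
    rcases this with h | h <;> simp [h, List.filter_cons] <;> omega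

theorem phi2_mk : ∀ (L : List (Fin 2 × Bool)),
    (phi (FreeGroup.mk L)).2 = FreeGroup.mk (expand L) := by
  intro L
  induction L with
  | nil =>
    show (phi 1).2 = (1 : FreeGroup (Fin 2))
    simp
  | cons p L ih =>
    have h1 : FreeGroup.mk (p :: L) = FreeGroup.mk [p] * FreeGroup.mk L := by
      rw [FreeGroup.mul_mk]; rfl
    rw [h1, map_mul, Prod.snd_mul, ih, expand_cons, ← FreeGroup.mul_mk]
    congr 1
    obtain ⟨x, b⟩ := p
    have hx : x = 0 ∨ x = 1 := by omega
    have hof : ∀ (a : Fin 2), FreeGroup.mk [(a, true)] = FreeGroup.of a := fun _ => rfl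
    have hofinv : ∀ (a : Fin 2), FreeGroup.mk [(a, false)] = (FreeGroup.of a)⁻¹ := by
      intro a
      rw [← hof, FreeGroup.inv_mk]
      rfl
    have p0 : phi (FreeGroup.of 0) = (FreeGroup.of 0, FreeGroup.of 0) := by
      rw [phi, FreeGroup.lift_apply_of]; simp
    have p1 : phi (FreeGroup.of 1) = (FreeGroup.of 1, FreeGroup.of 1 ^ 2) := by
      rw [phi, FreeGroup.lift_apply_of]; simp
    have h2 : FreeGroup.of (1 : Fin 2) ^ 2 = FreeGroup.mk [(1, true), (1, true)] := by
      rw [pow_two, ← hof, FreeGroup.mul_mk]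
      rfl
    have h3 : FreeGroup.mk [((1 : Fin 2), false), (1, false)] = (FreeGroup.of (1 : Fin 2) ^ 2)⁻¹ := by
      rw [h2, FreeGroup.inv_mk]
      congr 1
    rcases hx with hx | hx <;> subst hx <;> cases b
    · rw [hofinv, map_inv, p0, Prod.snd_inv, show ex ((0 : Fin 2), false) =
        [((0 : Fin 2), false)] from by simp [ex], hofinv]
    · rw [hof, p0, show ex ((0 : Fin 2), true) = [((0 : Fin 2), true)] from by simp [ex], hof]
    · rw [hofinv, map_inv, p1, Prod.snd_inv, show ex ((1 : Fin 2), false) =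
        [((1 : Fin 2), false), ((1 : Fin 2), false)] from by simp [ex], h3]
    · rw [hof, p1, show ex ((1 : Fin 2), true) =
        [((1 : Fin 2), true), ((1 : Fin 2), true)] from by simp [ex], ← h2]

theorem phi1 (w : FreeGroup (Fin 2)) : (phi w).1 = w := by
  have : (MonoidHom.fst _ _).comp phi = MonoidHom.id (FreeGroup (Fin 2)) := by
    apply FreeGroup.ext_hom
    intro a
    have : a = 0 ∨ a = 1 := by omega
    rcases this with h | h <;> subst h <;> simp [phi, FreeGroup.lift_apply_of]
  exact DFunLike.congr_fun this w

end TwistExp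

theorem wordlength_in_twisted_diagonal (w : FreeGroup (Fin 2)) (hw : w ≠ 1)
    (n m : ℕ)
    (hn : n = (w.toWord.filter (fun p => decide (p.1 = 0))).length)
    (hm : m = (w.toWord.filter (fun p => decide (p.1 = 1))).length) :
    (phi w).1.norm = n + m ∧ (phi w).2.norm = n + 2 * m ∧
      ((phi w).2.norm : ℝ) / ((phi w).1.norm : ℝ) ∈ Set.Icc (1 : ℝ) 2 := by
  set L := w.toWord with hL
  have hred : FreeGroup.reduce L = L := FreeGroup.reduce_toWord w
  have hmkL : FreeGroup.mk L = w := FreeGroup.mk_toWord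
  -- split of length
  have hnm : n + m = L.length := by
    rw [hn, hm]
    clear hn hm hred hmkL
    induction L with
    | nil => rfl
    | cons p L ih =>
      have : p.1 = 0 ∨ p.1 = 1 := by omega
      rcases this with h | h <;> simp [List.filter_cons, h] <;> omega
  -- first component
  have h1 : (phi w).1.norm = n + m := by
    rw [TwistExp.phi1, FreeGroup.norm, hnm]
  -- second component
  have h2 : (phi w).2.norm = n + 2 * m := by
    rw [← hmkL, TwistExp.phi2_mk, FreeGroup.norm, FreeGroup.toWord_mk,
      TwistAux.reduce_eq_of_chain' _ (TwistExp.chain'_expand L (TwistAux.chain'_of_reduce_eq L hred)),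
      TwistExp.length_expand, hn, hm]
  refine ⟨h1, h2, ?_⟩
  have hLne : L ≠ [] := by
    intro h
    exact hw (FreeGroup.toWord_eq_nil_iff.mp (hL ▸ h))
  have hpos : 0 < n + m := by
    rw [hnm]
    exact List.length_pos_iff.mpr hLne
  rw [h1, h2]
  have hp : (0 : ℝ) < ((n + m : ℕ) : ℝ) := by exact_mod_cast hpos
  constructor
  · rw [le_div_iff₀ hp]; push_cast; linarith
  · rw [div_le_iff₀ hp]; push_cast; linarith
end
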